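/- Let R be a commutative ring. The functor 𝖳 : R-mod → Fun(Γ₊,R), defined by 𝖳(M)(S) = ⊕_{s ∈ S∖{o}} M, is exact and fully faithful. -/

import Mathlib

open CategoryTheory Limits

/-- `Γ₊`: the category of finite pointed sets. -/
abbrev GammaPlus : Type 1 := CategoryTheory.ObjectProperty.FullSubcategory (fun X : Pointed => Finite X.X)

/-- `[n]₊ ∈ Γ₊`: the pointed set with `n` non-basepoint elements and basepoint `o = none`. -/
def GammaPlus.of (n : ℕ) : GammaPlus := ⟨⟨Option (Fin n), none⟩, inferInstance⟩

/-- The set of non-basepoint elements of a finite pointed set. -/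
def GammaPlus.nb (S : GammaPlus) : Type := {s : S.obj.X // s ≠ S.obj.point}

variable (R : Type) [CommRing R]

open Classical in
/-- The linear map underlying the action of `𝖳(M)` on a pointed map `f : S ⟶ S'`:
the summand indexed by `s` is sent (identically) to the summand indexed by `f(s)`,
and to zero if `f(s) = o`. -/
noncomputable def spanTMapAux (M : ModuleCat R) {S S' : GammaPlus} (f : S ⟶ S') :
    (GammaPlus.nb S →₀ M) →ₗ[R] (GammaPlus.nb S' →₀ M) :=
  Finsupp.lsum R fun s =>
    if h : f.hom.toFun s.1 ≠ S'.obj.point then Finsupp.lsingle (⟨f.hom.toFun s.1, h⟩ : GammaPlus.nb S')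
    else 0

open Classical in
lemma spanTMapAux_single (M : ModuleCat R) {S S' : GammaPlus} (f : S ⟶ S') (s : GammaPlus.nb S)
    (m : M) :
    spanTMapAux R M f (Finsupp.single s m) =
      if h : f.hom.toFun s.1 ≠ S'.obj.point then Finsupp.single (⟨f.hom.toFun s.1, h⟩ : GammaPlus.nb S') m
      else 0 := by
  unfold spanTMapAux
  rw [Finsupp.lsum_single]
  split_ifs with h <;> rfl

lemma spanTMapAux_id (M : ModuleCat R) (S : GammaPlus) :
    spanTMapAux R M (𝟙 S) = LinearMap.id := by
  apply Finsupp.lhom_ext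
  intro s m
  rw [spanTMapAux_single, LinearMap.id_apply]
  split_ifs with h
  · rfl
  · exact absurd s.2 h

lemma spanTMapAux_comp (M : ModuleCat R) {S S' S'' : GammaPlus} (f : S ⟶ S') (g : S' ⟶ S'') :
    spanTMapAux R M (f ≫ g) = (spanTMapAux R M g).comp (spanTMapAux R M f) := by
  apply Finsupp.lhom_ext
  intro s m
  rw [LinearMap.comp_apply, spanTMapAux_single, spanTMapAux_single]
  by_cases h1 : f.hom.toFun s.1 ≠ S'.obj.point
  · rw [dif_pos h1]; erw [spanTMapAux_single]
    split_ifs with hA hB hB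
    · rfl
    · exact absurd hA hB
    · exact absurd hB hA
    · rfl
  · rw [dif_neg h1]; erw [map_zero]
    have hg : g.hom.toFun (f.hom.toFun s.1) = S''.obj.point := by
      rw [not_not.mp h1]; exact g.hom.map_point
    split_ifs with hA
    · exact absurd hg hA
    · rfl

lemma spanTMapAux_natural {M N : ModuleCat R} (φ : M ⟶ N) {S S' : GammaPlus} (f : S ⟶ S') :
    (Finsupp.mapRange.linearMap (α := GammaPlus.nb S') φ.hom).comp (spanTMapAux R M f)
      = (spanTMapAux R N f).comp (Finsupp.mapRange.linearMap φ.hom) := by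
  apply Finsupp.lhom_ext
  intro s m
  rw [LinearMap.comp_apply, LinearMap.comp_apply, spanTMapAux_single]
  erw [Finsupp.mapRange.linearMap_apply, Finsupp.mapRange.linearMap_apply,
    Finsupp.mapRange_single, spanTMapAux_single]
  by_cases h : f.hom.toFun s.1 ≠ S'.obj.point
  · rw [dif_pos h, dif_pos h]; erw [Finsupp.mapRange_single]; rfl
  · rw [dif_neg h, dif_neg h]; erw [Finsupp.mapRange_zero]; rfl

/-- The functor `𝖳 : R-mod ⥤ Fun(Γ₊, R)`, with `𝖳(M)(S) = ⊕_{s ∈ S∖{o}} M`;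
a pointed map `f` sends the summand indexed by `s` identically to the summand indexed
by `f(s)`, and to zero if `f(s) = o`. -/
noncomputable def spanT : ModuleCat R ⥤ (GammaPlus ⥤ ModuleCat R) where
  obj M :=
    { obj := fun S => ModuleCat.of R (GammaPlus.nb S →₀ M)
      map := fun f => ModuleCat.ofHom (spanTMapAux R M f)
      map_id := fun S => ModuleCat.hom_ext (spanTMapAux_id R M S)
      map_comp := fun f g => ModuleCat.hom_ext (spanTMapAux_comp R M f g) }
  map {M N} φ :=
    { app := fun S => ModuleCat.ofHom (Finsupp.mapRange.linearMap φ.hom)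
      naturality := fun {S S'} f => ModuleCat.hom_ext (spanTMapAux_natural R φ f) }
  map_id M := by
    ext S : 2
    exact ModuleCat.hom_ext Finsupp.mapRange.linearMap_id
  map_comp φ ψ := by
    ext S : 2
    exact ModuleCat.hom_ext (Finsupp.mapRange.linearMap_comp _ _)

/-- The reduced span functor `T ∈ Fun(Γ₊, R)`, `T(S) = ⊕_{s ∈ S∖{o}} R`. -/
noncomputable def reducedSpan : GammaPlus ⥤ ModuleCat R := (spanT R).obj (ModuleCat.of R R)

instance (S : GammaPlus) : Finite (GammaPlus.nb S) := by
  haveI := S.property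
  exact Subtype.finite

section LinearLevel
variable (R : Type) [CommRing R] (ι : Type) [Finite ι]
variable {M N P : Type*} [AddCommGroup M] [Module R M] [AddCommGroup N] [Module R N]
  [AddCommGroup P] [Module R P]

/-- Forward map of the self-adjunction hom-equivalence. -/
noncomputable def toFAux (f : (ι →₀ M) →ₗ[R] N) : M →ₗ[R] (ι →₀ N) :=
  (Finsupp.linearEquivFunOnFinite R N ι).symm.toLinearMap ∘ₗ
    LinearMap.pi (fun i => f ∘ₗ Finsupp.lsingle i)

/-- Backward map of the self-adjunction hom-equivalence. -/
noncomputable def invFAux (g : M →ₗ[R] (ι →₀ N)) : (ι →₀ M) →ₗ[R] N :=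
  Finsupp.lsum R fun i => Finsupp.lapply i ∘ₗ g

lemma toFAux_apply (f : (ι →₀ M) →ₗ[R] N) (m : M) (a : ι) :
    toFAux R ι f m a = f (Finsupp.single a m) := rfl

lemma invFAux_single (g : M →ₗ[R] (ι →₀ N)) (a : ι) (m : M) :
    invFAux R ι g (Finsupp.single a m) = g m a := by
  simp [invFAux]

lemma invFAux_toFAux (f : (ι →₀ M) →ₗ[R] N) : invFAux R ι (toFAux R ι f) = f := by
  apply Finsupp.lhom_ext
  intro i m
  rw [invFAux_single, toFAux_apply]

lemma toFAux_invFAux (g : M →ₗ[R] (ι →₀ N)) : toFAux R ι (invFAux R ι g) = g := by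
  ext m a
  rw [toFAux_apply, invFAux_single]

lemma invFAux_natL (f : M →ₗ[R] N) (g : N →ₗ[R] (ι →₀ P)) :
    invFAux R ι (g ∘ₗ f) = (invFAux R ι g) ∘ₗ Finsupp.mapRange.linearMap f := by
  apply Finsupp.lhom_ext
  intro i m
  simp only [invFAux_single, LinearMap.comp_apply, Finsupp.mapRange.linearMap_apply,
    Finsupp.mapRange_single]

lemma toFAux_natR (f : (ι →₀ M) →ₗ[R] N) (g : N →ₗ[R] P) :
    toFAux R ι (g ∘ₗ f) = Finsupp.mapRange.linearMap g ∘ₗ toFAux R ι f := by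
  ext m a
  simp only [toFAux_apply, LinearMap.comp_apply, Finsupp.mapRange.linearMap_apply,
    Finsupp.mapRange_apply]

end LinearLevel

/-- The composite of `spanT` with evaluation at `S` is self-adjoint
(it is the finite biproduct of `nb S` copies of the identity functor). -/
noncomputable def spanTEvalSelfAdj (S : GammaPlus) :
    (spanT R ⋙ (evaluation GammaPlus (ModuleCat R)).obj S) ⊣
      (spanT R ⋙ (evaluation GammaPlus (ModuleCat R)).obj S) :=
  Adjunction.mkOfHomEquiv
    { homEquiv := fun M N =>
        { toFun := fun f => ModuleCat.ofHom (toFAux R (GammaPlus.nb S) f.hom)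
          invFun := fun g => ModuleCat.ofHom (invFAux R (GammaPlus.nb S) g.hom)
          left_inv := fun f => ModuleCat.hom_ext (invFAux_toFAux R (GammaPlus.nb S) f.hom)
          right_inv := fun g => ModuleCat.hom_ext (toFAux_invFAux R (GammaPlus.nb S) g.hom) }
      homEquiv_naturality_left_symm := fun {M M' N} f g =>
        ModuleCat.hom_ext (invFAux_natL R (GammaPlus.nb S) f.hom g.hom)
      homEquiv_naturality_right := fun {M N N'} f g =>
        ModuleCat.hom_ext (toFAux_natR R (GammaPlus.nb S) f.hom g.hom) }

/-- The distinguished non-basepoint element of `[1]₊`. -/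
def GammaPlus.pt1 : GammaPlus.nb (GammaPlus.of 1) := ⟨some 0, Option.some_ne_none 0⟩

lemma GammaPlus.nb_of_one_eq (a : GammaPlus.nb (GammaPlus.of 1)) : a = GammaPlus.pt1 := by
  obtain ⟨x, hx⟩ := a
  match x with
  | none => exact absurd rfl hx
  | some i => exact Subtype.ext (by simp [GammaPlus.pt1, Subsingleton.elim i 0]; rfl)

/-- The pointed map `[1]₊ ⟶ S` sending the non-basepoint element to `s`. -/
def GammaPlus.toOf (S : GammaPlus) (s : GammaPlus.nb S) : GammaPlus.of 1 ⟶ S where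
  hom := { toFun := fun x => Option.casesOn x S.obj.point (fun _ => s.1)
           map_point := rfl }

lemma eta_app_single {R : Type} [CommRing R] {M N : ModuleCat R}
    (η : (spanT R).obj M ⟶ (spanT R).obj N) (S : GammaPlus) (s : GammaPlus.nb S) (m : M) :
    ((η.app S).hom : (GammaPlus.nb S →₀ M) →ₗ[R] (GammaPlus.nb S →₀ N)) (Finsupp.single s m) =
      Finsupp.single s ((Finsupp.lapply GammaPlus.pt1 :
          (GammaPlus.nb (GammaPlus.of 1) →₀ N) →ₗ[R] N)
        (((η.app (GammaPlus.of 1)).hom :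
            (GammaPlus.nb (GammaPlus.of 1) →₀ M) →ₗ[R] (GammaPlus.nb (GammaPlus.of 1) →₀ N))
          (Finsupp.single GammaPlus.pt1 m))) := by
  have hnat : (((η.app S).hom : (GammaPlus.nb S →₀ M) →ₗ[R] (GammaPlus.nb S →₀ N)).comp
        (spanTMapAux R M (GammaPlus.toOf S s)))
      = ((spanTMapAux R N (GammaPlus.toOf S s)).comp
        (((η.app (GammaPlus.of 1)).hom :
          (GammaPlus.nb (GammaPlus.of 1) →₀ M) →ₗ[R] (GammaPlus.nb (GammaPlus.of 1) →₀ N)))) :=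
    congrArg ModuleCat.Hom.hom (η.naturality (GammaPlus.toOf S s))
  have h1 : spanTMapAux R M (GammaPlus.toOf S s) (Finsupp.single GammaPlus.pt1 m)
      = Finsupp.single s m := by
    rw [spanTMapAux_single]
    split_ifs with h
    · exact congrArg (fun t => Finsupp.single t m) (Subtype.ext rfl)
    · exact absurd s.2 h
  have h2 : ((η.app S).hom : (GammaPlus.nb S →₀ M) →ₗ[R] (GammaPlus.nb S →₀ N))
        (spanTMapAux R M (GammaPlus.toOf S s) (Finsupp.single GammaPlus.pt1 m))
      = spanTMapAux R N (GammaPlus.toOf S s)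
        (((η.app (GammaPlus.of 1)).hom :
          (GammaPlus.nb (GammaPlus.of 1) →₀ M) →ₗ[R] (GammaPlus.nb (GammaPlus.of 1) →₀ N))
        (Finsupp.single GammaPlus.pt1 m)) :=
    LinearMap.congr_fun hnat (Finsupp.single GammaPlus.pt1 m)
  rw [h1] at h2
  have hw : ((η.app (GammaPlus.of 1)).hom :
        (GammaPlus.nb (GammaPlus.of 1) →₀ M) →ₗ[R] (GammaPlus.nb (GammaPlus.of 1) →₀ N))
      (Finsupp.single GammaPlus.pt1 m)
      = Finsupp.single GammaPlus.pt1 ((Finsupp.lapply GammaPlus.pt1 :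
          (GammaPlus.nb (GammaPlus.of 1) →₀ N) →ₗ[R] N)
        (((η.app (GammaPlus.of 1)).hom :
          (GammaPlus.nb (GammaPlus.of 1) →₀ M) →ₗ[R] (GammaPlus.nb (GammaPlus.of 1) →₀ N))
        (Finsupp.single GammaPlus.pt1 m))) :=
    Finsupp.ext fun a => by
      rw [GammaPlus.nb_of_one_eq a, Finsupp.single_eq_same]; rfl
  rw [hw, spanTMapAux_single] at h2
  rw [h2]
  split_ifs with h
  · exact congrArg (fun t => Finsupp.single t _) (Subtype.ext rfl)
  · exact absurd s.2 h

/-- The functor `𝖳 : R-mod ⥤ Fun(Γ₊, R)`, `𝖳(M)(S) = ⊕_{s ∈ S∖{o}} M`, is exact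
(it preserves finite limits and finite colimits) and fully faithful. -/
theorem spanT_exact_fullyFaithful (R : Type) [CommRing R] :
    Nonempty (PreservesFiniteLimits (spanT R)) ∧
    Nonempty (PreservesFiniteColimits (spanT R)) ∧
    (spanT R).Full ∧ (spanT R).Faithful := by
  refine ⟨⟨⟨fun J _ _ => ?_⟩⟩, ⟨⟨fun J _ _ => ?_⟩⟩, ⟨fun {M N} η => ?_⟩, ⟨fun {M N} φ ψ h => ?_⟩⟩
  · refine preservesLimitsOfShape_of_evaluation _ J fun S => ?_
    refine (Adjunction.rightAdjoint_preservesLimits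
      (F := spanT R ⋙ (evaluation GammaPlus (ModuleCat R)).obj S) ?_).preservesLimitsOfShape
    exact spanTEvalSelfAdj R S
  · refine preservesColimitsOfShape_of_evaluation _ J fun S => ?_
    refine (Adjunction.leftAdjoint_preservesColimits
      (G := spanT R ⋙ (evaluation GammaPlus (ModuleCat R)).obj S) ?_).preservesColimitsOfShape
    exact spanTEvalSelfAdj R S
  · refine ⟨ModuleCat.ofHom <| Finsupp.lapply GammaPlus.pt1 ∘ₗ
        ((η.app (GammaPlus.of 1)).hom :
          (GammaPlus.nb (GammaPlus.of 1) →₀ M) →ₗ[R] (GammaPlus.nb (GammaPlus.of 1) →₀ N)) ∘ₗ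
        Finsupp.lsingle GammaPlus.pt1, ?_⟩
    ext S : 2
    apply ModuleCat.hom_ext
    apply Finsupp.lhom_ext
    intro s m
    refine Eq.trans ?_ (eta_app_single η S s m).symm
    show Finsupp.mapRange.linearMap _ (Finsupp.single s m) = _
    rw [Finsupp.mapRange.linearMap_apply, Finsupp.mapRange_single]
    rfl
  · have hh : Finsupp.mapRange.linearMap (α := GammaPlus.nb (GammaPlus.of 1)) φ.hom
        = Finsupp.mapRange.linearMap ψ.hom :=
      congrArg (fun (ρ : (spanT R).obj M ⟶ (spanT R).obj N) => (ρ.app (GammaPlus.of 1)).hom) h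
    apply ModuleCat.hom_ext
    apply LinearMap.ext
    intro m
    have h2 := LinearMap.congr_fun hh (Finsupp.single GammaPlus.pt1 m)
    rw [Finsupp.mapRange.linearMap_apply, Finsupp.mapRange.linearMap_apply,
      Finsupp.mapRange_single, Finsupp.mapRange_single] at h2
    have h4 : (Finsupp.single GammaPlus.pt1 (φ m)) GammaPlus.pt1
        = (Finsupp.single GammaPlus.pt1 (ψ m)) GammaPlus.pt1 := by rw [h2]
    rwa [Finsupp.single_eq_same, Finsupp.single_eq_same] at h4
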